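/- Fix k, s1, s2 with 2s1 + s2 ≤ 2k. Let I(k, s1, s2) be the set of 2k-diagrams (Z2-stable equivalence relations on (Fin k ⊕ Fin k) × ZMod 2) having exactly 2s1 + s2 through classes, of which exactly 2s1 are non-invariant under g (these occur in s1 pairs {C, g·C}) and exactly s2 are g-invariant. Let M(k, s1, s2) be the set of pairs (d', P), where d' is a Z2-stable equivalence relation on Fin k × ZMod 2 and P consists of a choice of s1 unordered pairs {C, g·C} of distinct non-invariant equivalence classes of d' together with s2 g-invariant equivalence classes of d' (the chosen pairs and classes being indexed by Fin s1 and Fin s2 in increasing order of their minimal vertices). Then the map sending a diagram d to the triple consisting of its top restriction with its through-class data (d⁺, P), its bottom restriction with its through-class data (d⁻, Q), and the element ((f, σ1), σ2) ∈ (Fin s1 → ZMod 2) × Equiv.Perm (Fin s1) × Equiv.Perm (Fin s2) recording how the through classes of d connect top data to bottom data, is a bijection from I(k, s1, s2) onto M(k, s1, s2) × ((Fin s1 → ZMod 2) × Equiv.Perm (Fin s1) × Equiv.Perm (Fin s2)) × M(k, s1, s2). -/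

import Mathlib

/-- The action of the nonidentity element `g` of `ZMod 2`: `(t,x) ↦ (t, 1+x)`. -/
def gAct {T : Type*} (p : T × ZMod 2) : T × ZMod 2 := (p.1, 1 + p.2)

/-- An equivalence relation on `T × ZMod 2` is `ZMod 2`-stable if it is preserved by
the action `g·(t,x) = (t, g+x)`. -/
def IsStable {T : Type*} (d : Setoid (T × ZMod 2)) : Prop :=
  ∀ g : ZMod 2, ∀ p q : T × ZMod 2, d.r p q → d.r (p.1, g + p.2) (q.1, g + q.2)

/-- A through class: a subset of `(X ⊕ Y) × ZMod 2` meeting both the top row and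
the bottom row. -/
def Through {X Y : Type*} (C : Set ((X ⊕ Y) × ZMod 2)) : Prop :=
  (∃ a x, (Sum.inl a, x) ∈ C) ∧ (∃ b x, (Sum.inr b, x) ∈ C)

/-- The minimal vertex (as a natural number) of a subset of `Fin k × ZMod 2`. -/
noncomputable def minV {k : ℕ} (C : Set (Fin k × ZMod 2)) : ℕ :=
  sInf ((fun p : Fin k × ZMod 2 => (p.1 : ℕ)) '' C)

section TW
variable {T : Type*}

/-- twist a subset of `T × ZMod 2` by `x`. -/
def tw (x : ZMod 2) (S : Set (T × ZMod 2)) : Set (T × ZMod 2) := {p | (p.1, x + p.2) ∈ S}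

lemma zmod2_aab (a b : ZMod 2) : a + (a + b) = b := by revert a b; decide

lemma zmod2_add_self (a : ZMod 2) : a + a = 0 := by revert a; decide

lemma zmod2_ne_iff {a b : ZMod 2} : a ≠ b ↔ a + b = 1 := by revert a b; decide

lemma mem_tw {x : ZMod 2} {S : Set (T × ZMod 2)} {p : T × ZMod 2} :
    p ∈ tw x S ↔ (p.1, x + p.2) ∈ S := Iff.rfl

lemma tw_tw (x y : ZMod 2) (S : Set (T × ZMod 2)) : tw x (tw y S) = tw (x + y) S := by
  ext p; simp [mem_tw, add_assoc, add_comm x y]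

lemma tw_zero (S : Set (T × ZMod 2)) : tw 0 S = S := by
  ext p; simp [mem_tw]

lemma gAct_image (S : Set (T × ZMod 2)) : gAct '' S = tw 1 S := by
  ext p
  constructor
  · rintro ⟨q, hq, rfl⟩
    simpa [gAct, mem_tw, zmod2_aab] using hq
  · intro hp
    exact ⟨(p.1, 1 + p.2), hp, by simp [gAct, zmod2_aab]⟩

lemma tw_inj {x : ZMod 2} {S S' : Set (T × ZMod 2)} (h : tw x S = tw x S') : S = S' := by
  have := congrArg (tw x) h
  rwa [tw_tw, tw_tw, zmod2_add_self, tw_zero, tw_zero] at this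

lemma minV_tw {k : ℕ} (x : ZMod 2) (S : Set (Fin k × ZMod 2)) : minV (tw x S) = minV S := by
  unfold minV
  congr 1
  ext n
  constructor
  · rintro ⟨p, hp, rfl⟩; exact ⟨(p.1, x + p.2), hp, rfl⟩
  · rintro ⟨p, hp, rfl⟩
    exact ⟨(p.1, x + p.2), by simpa [mem_tw, zmod2_aab] using hp, rfl⟩

end TW

section Classes
variable {α : Type*} {d : Setoid α}

lemma class_nonempty {C : Set α} (hC : C ∈ d.classes) : C.Nonempty := by
  obtain ⟨y, rfl⟩ := hC; exact ⟨y, d.refl' y⟩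

lemma rel_of_mem_class {C : Set α} (hC : C ∈ d.classes) {x y : α}
    (hx : x ∈ C) (hy : y ∈ C) : d.r x y := by
  obtain ⟨z, rfl⟩ := hC; exact d.trans' hx (d.symm' hy)

lemma mem_class_of_rel {C : Set α} (hC : C ∈ d.classes) {x y : α}
    (hx : x ∈ C) (hxy : d.r y x) : y ∈ C := by
  obtain ⟨z, rfl⟩ := hC; exact d.trans' hxy hx

lemma class_eq_of_mem {C : Set α} (hC : C ∈ d.classes) {x : α} (hx : x ∈ C) :
    C = {y | d.r y x} := by
  obtain ⟨z, rfl⟩ := hC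
  ext y
  exact ⟨fun hy => d.trans' hy (d.symm' hx), fun hy => d.trans' hy hx⟩

lemma classes_eq_of_inter {C C' : Set α} (hC : C ∈ d.classes) (hC' : C' ∈ d.classes)
    (h : (C ∩ C').Nonempty) : C = C' := by
  obtain ⟨x, hx, hx'⟩ := h
  exact Setoid.eq_of_mem_classes hC hx hC' hx'

end Classes

section StableClasses
variable {T : Type*} {d : Setoid (T × ZMod 2)}

lemma tw_class (hd : IsStable d) {C : Set (T × ZMod 2)} (hC : C ∈ d.classes) (x : ZMod 2) :
    tw x C ∈ d.classes := by
  obtain ⟨y, rfl⟩ := hC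
  refine ⟨(y.1, x + y.2), ?_⟩
  ext p
  constructor
  · intro hp
    have := hd x (p.1, x + p.2) y hp
    simpa [zmod2_aab] using this
  · intro hp
    have := hd x p (y.1, x + y.2) hp
    show d.r (p.1, x + p.2) y
    simpa [zmod2_aab] using this

end StableClasses

/-- `MData k s1 s2` is the set `M[(r,(s1,s2))]`: a `ZMod 2`-stable equivalence
relation `d` on `Fin k × ZMod 2` together with a choice of `s1` unordered pairs
`{C, g·C}` of distinct non-`g`-invariant classes of `d` (each pair recorded by its
normalized representative, the member class containing `(i₀, 0)` where `i₀` is the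
minimal vertex of the pair) and a choice of `s2` `g`-invariant classes of `d`,
both families being indexed by `Fin s1`, resp. `Fin s2`, in increasing order of
their minimal vertices. -/
structure MData (k s1 s2 : ℕ) where
  d : Setoid (Fin k × ZMod 2)
  stable : IsStable d
  pairRep : Fin s1 → Set (Fin k × ZMod 2)
  pairRep_mem : ∀ i, pairRep i ∈ d.classes
  pairRep_noninv : ∀ i, gAct '' pairRep i ≠ pairRep i
  pairRep_norm : ∀ i, ∃ j : Fin k,
    (j : ℕ) = minV (pairRep i) ∧ (j, (0 : ZMod 2)) ∈ pairRep i
  pairRep_mono : StrictMono fun i => minV (pairRep i)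
  invCl : Fin s2 → Set (Fin k × ZMod 2)
  invCl_mem : ∀ l, invCl l ∈ d.classes
  invCl_inv : ∀ l, gAct '' invCl l = invCl l
  invCl_mono : StrictMono fun l => minV (invCl l)

/-- `d` belongs to `I(k, s1, s2)`: `d` is a `ZMod 2`-stable equivalence relation on
`(Fin k ⊕ Fin k) × ZMod 2` having exactly `2·s1 + s2` through classes, of which
exactly `2·s1` are non-`g`-invariant (occurring in `s1` pairs `{C, g·C}`) and
exactly `s2` are `g`-invariant. -/
def IsDiagram (k s1 s2 : ℕ) (d : Setoid ((Fin k ⊕ Fin k) × ZMod 2)) : Prop :=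
  IsStable d ∧
  Nat.card {C : Set ((Fin k ⊕ Fin k) × ZMod 2) //
      C ∈ d.classes ∧ Through C ∧ gAct '' C ≠ C} = 2 * s1 ∧
  Nat.card {C : Set ((Fin k ⊕ Fin k) × ZMod 2) //
      C ∈ d.classes ∧ Through C ∧ gAct '' C = C} = s2

namespace MData
variable {k s1 s2 : ℕ} (M : MData k s1 s2)

lemma pairRep_class_tw (i : Fin s1) (a : ZMod 2) : tw a (M.pairRep i) ∈ M.d.classes :=
  tw_class M.stable (M.pairRep_mem i) a

lemma zmod2_cases (a : ZMod 2) : a = 0 ∨ a = 1 := by revert a; decide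

lemma invCl_tw (l : Fin s2) (a : ZMod 2) : tw a (M.invCl l) = M.invCl l := by
  rcases zmod2_cases a with rfl | rfl
  · exact tw_zero _
  · rw [← gAct_image]; exact M.invCl_inv l

lemma pairRep_tw_ne (i : Fin s1) : tw 1 (M.pairRep i) ≠ M.pairRep i := by
  rw [← gAct_image]; exact M.pairRep_noninv i

/-- key disjointness: the twisted chosen pair classes are pairwise distinct. -/
lemma tw_pairRep_eq {i j : Fin s1} {a b : ZMod 2}
    (h : tw a (M.pairRep i) = tw b (M.pairRep j)) : a = b ∧ i = j := by
  have hmin : minV (M.pairRep i) = minV (M.pairRep j) := by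
    have := congrArg minV h
    rwa [minV_tw, minV_tw] at this
  have hij : i = j := M.pairRep_mono.injective hmin
  subst hij
  refine ⟨?_, rfl⟩
  by_contra hab
  have h1 : a + b = 1 := zmod2_ne_iff.mp hab
  have := congrArg (tw a) h
  rw [tw_tw, tw_tw, zmod2_add_self, tw_zero, h1] at this
  exact M.pairRep_tw_ne i this.symm

lemma tw_pairRep_mem_unique {i j : Fin s1} {a b : ZMod 2} {x : Fin k × ZMod 2}
    (hx : x ∈ tw a (M.pairRep i)) (hy : x ∈ tw b (M.pairRep j)) : a = b ∧ i = j :=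
  M.tw_pairRep_eq (classes_eq_of_inter (M.pairRep_class_tw i a) (M.pairRep_class_tw j b) ⟨x, hx, hy⟩)

lemma pairRep_invCl_disj {i : Fin s1} {a : ZMod 2} {l : Fin s2} {x : Fin k × ZMod 2}
    (hx : x ∈ tw a (M.pairRep i)) (hy : x ∈ M.invCl l) : False := by
  have h := classes_eq_of_inter (M.pairRep_class_tw i a) (M.invCl_mem l) ⟨x, hx, hy⟩
  have h1 : tw 1 (tw a (M.pairRep i)) = tw a (M.pairRep i) := by
    rw [h, ← gAct_image]; exact M.invCl_inv l
  rw [tw_tw] at h1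
  obtain ⟨hab, -⟩ := M.tw_pairRep_eq h1
  nth_rewrite 2 [← zero_add a] at hab
  exact one_ne_zero (add_right_cancel hab)

lemma invCl_mem_unique {l l' : Fin s2} {x : Fin k × ZMod 2}
    (hx : x ∈ M.invCl l) (hy : x ∈ M.invCl l') : l = l' := by
  have h := classes_eq_of_inter (M.invCl_mem l) (M.invCl_mem l') ⟨x, hx, hy⟩
  have := congrArg minV h
  exact M.invCl_mono.injective this

lemma pairRep_nonempty (i : Fin s1) : (M.pairRep i).Nonempty := class_nonempty (M.pairRep_mem i)

lemma invCl_nonempty (l : Fin s2) : (M.invCl l).Nonempty := class_nonempty (M.invCl_mem l)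

end MData

section Cross
variable {k s1 s2 : ℕ}

abbrev Conn (s1 s2 : ℕ) := ((Fin s1 → ZMod 2) × Equiv.Perm (Fin s1)) × Equiv.Perm (Fin s2)

def cross (M1 M2 : MData k s1 s2) (c : Conn s1 s2) (p q : Fin k × ZMod 2) : Prop :=
  (∃ i a, p ∈ tw a (M1.pairRep i) ∧ q ∈ tw (a + c.1.1 i) (M2.pairRep (c.1.2 i))) ∨
  (∃ l, p ∈ M1.invCl l ∧ q ∈ M2.invCl (c.2 l))

variable {M1 M2 : MData k s1 s2} {c : Conn s1 s2}

lemma cross_trans_left {p p' q : Fin k × ZMod 2}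
    (h : cross M1 M2 c p q) (h' : cross M1 M2 c p' q) : M1.d.r p p' := by
  rcases h with ⟨i, a, hp, hq⟩ | ⟨l, hp, hq⟩ <;>
    rcases h' with ⟨i', a', hp', hq'⟩ | ⟨l', hp', hq'⟩
  · obtain ⟨hA, hI⟩ := M2.tw_pairRep_mem_unique hq hq'
    have hii : i = i' := c.1.2.injective hI
    subst hii
    have haa : a = a' := by
      have := add_right_cancel hA; exact this
    subst haa
    exact rel_of_mem_class (M1.pairRep_class_tw i a) hp hp'
  · exact absurd (M2.pairRep_invCl_disj hq hq') id
  · exact absurd (M2.pairRep_invCl_disj hq' hq) id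
  · have hll : l = l' := c.2.injective (M2.invCl_mem_unique hq hq')
    subst hll
    exact rel_of_mem_class (M1.invCl_mem l) hp hp'

lemma cross_trans_right {p q q' : Fin k × ZMod 2}
    (h : cross M1 M2 c p q) (h' : cross M1 M2 c p q') : M2.d.r q q' := by
  rcases h with ⟨i, a, hp, hq⟩ | ⟨l, hp, hq⟩ <;>
    rcases h' with ⟨i', a', hp', hq'⟩ | ⟨l', hp', hq'⟩
  · obtain ⟨haa, hii⟩ := M1.tw_pairRep_mem_unique hp hp'
    subst haa; subst hii
    exact rel_of_mem_class (M2.pairRep_class_tw (c.1.2 i) (a + c.1.1 i)) hq hq'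
  · exact absurd (M1.pairRep_invCl_disj hp hp') id
  · exact absurd (M1.pairRep_invCl_disj hp' hp) id
  · have hll : l = l' := M1.invCl_mem_unique hp hp'
    subst hll
    exact rel_of_mem_class (M2.invCl_mem (c.2 l)) hq hq'

lemma cross_of_rel_left {p q z : Fin k × ZMod 2}
    (h : M1.d.r p q) (hc : cross M1 M2 c q z) : cross M1 M2 c p z := by
  rcases hc with ⟨i, a, hp, hq⟩ | ⟨l, hp, hq⟩
  · exact Or.inl ⟨i, a, mem_class_of_rel (M1.pairRep_class_tw i a) hp h, hq⟩
  · exact Or.inr ⟨l, mem_class_of_rel (M1.invCl_mem l) hp h, hq⟩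

lemma cross_of_rel_right {p q z : Fin k × ZMod 2}
    (hc : cross M1 M2 c p q) (h : M2.d.r q z) : cross M1 M2 c p z := by
  rcases hc with ⟨i, a, hp, hq⟩ | ⟨l, hp, hq⟩
  · exact Or.inl ⟨i, a, hp,
      mem_class_of_rel (M2.pairRep_class_tw (c.1.2 i) (a + c.1.1 i)) hq (M2.d.symm' h)⟩
  · exact Or.inr ⟨l, hp, mem_class_of_rel (M2.invCl_mem (c.2 l)) hq (M2.d.symm' h)⟩

lemma mem_tw_shift {T : Type*} {S : Set (T × ZMod 2)} {p : T × ZMod 2} {a : ZMod 2} (g : ZMod 2)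
    (h : p ∈ tw a S) : (p.1, g + p.2) ∈ tw (a + g) S := by
  show ((p.1 : T), (a + g) + (g + p.2)) ∈ S
  have : (a + g) + (g + p.2) = a + p.2 := by
    rw [add_assoc, ← add_assoc g g, zmod2_add_self, zero_add]
  rw [this]; exact h

lemma cross_tw {p q : Fin k × ZMod 2} (g : ZMod 2)
    (hc : cross M1 M2 c p q) : cross M1 M2 c (p.1, g + p.2) (q.1, g + q.2) := by
  rcases hc with ⟨i, a, hp, hq⟩ | ⟨l, hp, hq⟩
  · refine Or.inl ⟨i, a + g, mem_tw_shift g hp, ?_⟩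
    have := mem_tw_shift (S := M2.pairRep (c.1.2 i)) g hq
    have heq : (a + c.1.1 i) + g = (a + g) + c.1.1 i := by ring
    rwa [heq] at this
  · refine Or.inr ⟨l, ?_, ?_⟩
    · have := mem_tw_shift (S := M1.invCl l) (a := 0) g (by rwa [tw_zero])
      rwa [zero_add, M1.invCl_tw] at this
    · have := mem_tw_shift (S := M2.invCl (c.2 l)) (a := 0) g (by rwa [tw_zero])
      rwa [zero_add, M2.invCl_tw] at this

def bigR (M1 M2 : MData k s1 s2) (c : Conn s1 s2) :
    (Fin k ⊕ Fin k) × ZMod 2 → (Fin k ⊕ Fin k) × ZMod 2 → Prop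
  | (Sum.inl p, x), (Sum.inl q, y) => M1.d.r (p, x) (q, y)
  | (Sum.inl p, x), (Sum.inr q, y) => cross M1 M2 c (p, x) (q, y)
  | (Sum.inr p, x), (Sum.inl q, y) => cross M1 M2 c (q, y) (p, x)
  | (Sum.inr p, x), (Sum.inr q, y) => M2.d.r (p, x) (q, y)

def bigS (M1 M2 : MData k s1 s2) (c : Conn s1 s2) : Setoid ((Fin k ⊕ Fin k) × ZMod 2) where
  r := bigR M1 M2 c
  iseqv := by
    refine ⟨?_, ?_, ?_⟩
    · rintro ⟨p | p, x⟩
      · exact M1.d.refl' (p, x)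
      · exact M2.d.refl' (p, x)
    · rintro ⟨p | p, x⟩ ⟨q | q, y⟩ h
      · exact M1.d.symm' h
      · exact h
      · exact h
      · exact M2.d.symm' h
    · rintro ⟨p | p, x⟩ ⟨q | q, y⟩ ⟨r | r, z⟩ h1 h2
      · exact M1.d.trans' h1 h2
      · exact cross_of_rel_left h1 h2
      · exact cross_trans_left h1 h2
      · exact cross_of_rel_right h1 h2
      · exact cross_of_rel_left (M1.d.symm' h2) h1
      · exact cross_trans_right h1 h2
      · exact cross_of_rel_right h2 (M2.d.symm' h1)
      · exact M2.d.trans' h1 h2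

lemma bigS_stable : IsStable (bigS M1 M2 c) := by
  rintro g ⟨p | p, x⟩ ⟨q | q, y⟩ h
  · exact M1.stable g (p, x) (q, y) h
  · exact cross_tw g h
  · exact cross_tw g h
  · exact M2.stable g (p, x) (q, y) h

end Cross

section RowSets
variable {k : ℕ}

def topSet (A : Set (Fin k × ZMod 2)) : Set ((Fin k ⊕ Fin k) × ZMod 2) :=
  {w | ∃ p ∈ A, ((Sum.inl p.1 : Fin k ⊕ Fin k), p.2) = w}

def rowBotSet (A : Set (Fin k × ZMod 2)) : Set ((Fin k ⊕ Fin k) × ZMod 2) :=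
  {w | ∃ p ∈ A, ((Sum.inr p.1 : Fin k ⊕ Fin k), p.2) = w}

@[simp] lemma inl_mem_topSet {A : Set (Fin k × ZMod 2)} {a : Fin k} {x : ZMod 2} :
    ((Sum.inl a : Fin k ⊕ Fin k), x) ∈ topSet A ↔ (a, x) ∈ A := by
  constructor
  · rintro ⟨p, hp, heq⟩
    obtain ⟨h1, h2⟩ := Prod.mk.injEq _ _ _ _ ▸ heq
    cases Sum.inl.injEq _ _ ▸ h1
    simpa [← Sum.inl.inj h1, ← h2] using hp
  · intro h; exact ⟨(a, x), h, rfl⟩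

@[simp] lemma inr_not_mem_topSet {A : Set (Fin k × ZMod 2)} {b : Fin k} {x : ZMod 2} :
    ((Sum.inr b : Fin k ⊕ Fin k), x) ∉ topSet A := by
  rintro ⟨p, hp, heq⟩
  exact Sum.inl_ne_inr (congrArg Prod.fst heq)

@[simp] lemma inr_mem_rowBotSet {A : Set (Fin k × ZMod 2)} {a : Fin k} {x : ZMod 2} :
    ((Sum.inr a : Fin k ⊕ Fin k), x) ∈ rowBotSet A ↔ (a, x) ∈ A := by
  constructor
  · rintro ⟨p, hp, heq⟩
    obtain ⟨h1, h2⟩ := Prod.mk.injEq _ _ _ _ ▸ heq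
    simpa [← Sum.inr.inj h1, ← h2] using hp
  · intro h; exact ⟨(a, x), h, rfl⟩

@[simp] lemma inl_not_mem_rowBotSet {A : Set (Fin k × ZMod 2)} {b : Fin k} {x : ZMod 2} :
    ((Sum.inl b : Fin k ⊕ Fin k), x) ∉ rowBotSet A := by
  rintro ⟨p, hp, heq⟩
  exact Sum.inr_ne_inl (congrArg Prod.fst heq)

lemma union_row_inj {A A' B B' : Set (Fin k × ZMod 2)}
    (h : topSet A ∪ rowBotSet B = topSet A' ∪ rowBotSet B') : A = A' ∧ B = B' := by
  constructor
  · ext ⟨a, x⟩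
    have := Set.ext_iff.mp h ((Sum.inl a : Fin k ⊕ Fin k), x)
    simpa using this
  · ext ⟨a, x⟩
    have := Set.ext_iff.mp h ((Sum.inr a : Fin k ⊕ Fin k), x)
    simpa using this

lemma tw_topSet (g : ZMod 2) (A : Set (Fin k × ZMod 2)) :
    tw g (topSet A) = topSet (tw g A) := by
  ext ⟨s | s, x⟩ <;> simp [mem_tw]

lemma tw_rowBotSet (g : ZMod 2) (A : Set (Fin k × ZMod 2)) :
    tw g (rowBotSet A) = rowBotSet (tw g A) := by
  ext ⟨s | s, x⟩ <;> simp [mem_tw]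

lemma tw_union {T : Type*} (g : ZMod 2) (A B : Set (T × ZMod 2)) :
    tw g (A ∪ B) = tw g A ∪ tw g B := rfl

end RowSets

section ClassChar
variable {k s1 s2 : ℕ} (M1 M2 : MData k s1 s2) (c : Conn s1 s2)

/-- the candidate non-invariant through classes of `bigS`. -/
def F1 (i : Fin s1) (a : ZMod 2) : Set ((Fin k ⊕ Fin k) × ZMod 2) :=
  topSet (tw a (M1.pairRep i)) ∪ rowBotSet (tw (a + c.1.1 i) (M2.pairRep (c.1.2 i)))

/-- the candidate invariant through classes of `bigS`. -/
def F2 (l : Fin s2) : Set ((Fin k ⊕ Fin k) × ZMod 2) :=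
  topSet (M1.invCl l) ∪ rowBotSet (M2.invCl (c.2 l))

variable {M1 M2 c}

lemma classEq_top {p₀ : Fin k × ZMod 2} {i : Fin s1} {a : ZMod 2}
    (hp₀ : p₀ ∈ tw a (M1.pairRep i)) :
    {w | bigR M1 M2 c w ((Sum.inl p₀.1 : Fin k ⊕ Fin k), p₀.2)} = F1 M1 M2 c i a := by
  ext ⟨q | q, y⟩
  · show M1.d.r (q, y) (p₀.1, p₀.2) ↔ _
    rw [show ((p₀.1 : Fin k), p₀.2) = p₀ from rfl]
    constructor
    · intro h
      refine Set.mem_union_left _ ?_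
      exact inl_mem_topSet.mpr (mem_class_of_rel (M1.pairRep_class_tw i a) hp₀ h)
    · intro h
      rcases h with h | h
      · exact rel_of_mem_class (M1.pairRep_class_tw i a) (inl_mem_topSet.mp h) hp₀
      · exact absurd h (inl_not_mem_rowBotSet)
  · show cross M1 M2 c (p₀.1, p₀.2) (q, y) ↔ _
    rw [show ((p₀.1 : Fin k), p₀.2) = p₀ from rfl]
    constructor
    · rintro (⟨i', a', hp', hq'⟩ | ⟨l, hp', _⟩)
      · obtain ⟨ha, hi⟩ := M1.tw_pairRep_mem_unique hp' hp₀
        subst ha; subst hi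
        exact Set.mem_union_right _ (inr_mem_rowBotSet.mpr hq')
      · exact absurd (M1.pairRep_invCl_disj hp₀ hp') id
    · intro h
      rcases h with h | h
      · exact absurd h (inr_not_mem_topSet)
      · exact Or.inl ⟨i, a, hp₀, inr_mem_rowBotSet.mp h⟩

lemma classEq_inv {p₀ : Fin k × ZMod 2} {l : Fin s2} (hp₀ : p₀ ∈ M1.invCl l) :
    {w | bigR M1 M2 c w ((Sum.inl p₀.1 : Fin k ⊕ Fin k), p₀.2)} = F2 M1 M2 c l := by
  ext ⟨q | q, y⟩
  · show M1.d.r (q, y) (p₀.1, p₀.2) ↔ _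
    rw [show ((p₀.1 : Fin k), p₀.2) = p₀ from rfl]
    constructor
    · intro h
      exact Set.mem_union_left _ (inl_mem_topSet.mpr (mem_class_of_rel (M1.invCl_mem l) hp₀ h))
    · rintro (h | h)
      · exact rel_of_mem_class (M1.invCl_mem l) (inl_mem_topSet.mp h) hp₀
      · exact absurd h (inl_not_mem_rowBotSet)
  · show cross M1 M2 c (p₀.1, p₀.2) (q, y) ↔ _
    rw [show ((p₀.1 : Fin k), p₀.2) = p₀ from rfl]
    constructor
    · rintro (⟨i', a', hp', _⟩ | ⟨l', hp', hq'⟩)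
      · exact absurd (M1.pairRep_invCl_disj hp' hp₀) id
      · have := M1.invCl_mem_unique hp₀ hp'
        subst this
        exact Set.mem_union_right _ (inr_mem_rowBotSet.mpr hq')
    · rintro (h | h)
      · exact absurd h (inr_not_mem_topSet)
      · exact Or.inr ⟨l, hp₀, inr_mem_rowBotSet.mp h⟩

lemma classEq_rest {p₀ : Fin k × ZMod 2}
    (h1 : ∀ i a, p₀ ∉ tw a (M1.pairRep i)) (h2 : ∀ l, p₀ ∉ M1.invCl l) :
    {w | bigR M1 M2 c w ((Sum.inl p₀.1 : Fin k ⊕ Fin k), p₀.2)} =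
      topSet {v | M1.d.r v p₀} := by
  ext ⟨q | q, y⟩
  · show M1.d.r (q, y) (p₀.1, p₀.2) ↔ _
    rw [show ((p₀.1 : Fin k), p₀.2) = p₀ from rfl]
    simp only [inl_mem_topSet, Set.mem_setOf_eq]
  · show cross M1 M2 c (p₀.1, p₀.2) (q, y) ↔ _
    rw [show ((p₀.1 : Fin k), p₀.2) = p₀ from rfl]
    constructor
    · rintro (⟨i', a', hp', _⟩ | ⟨l', hp', _⟩)
      · exact absurd hp' (h1 i' a')
      · exact absurd hp' (h2 l')
    · intro h
      exact absurd h (inr_not_mem_topSet)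

lemma F1_mem_classes (i : Fin s1) (a : ZMod 2) :
    F1 M1 M2 c i a ∈ (bigS M1 M2 c).classes := by
  obtain ⟨p₀, hp₀⟩ := class_nonempty (M1.pairRep_class_tw i a)
  exact ⟨((Sum.inl p₀.1 : Fin k ⊕ Fin k), p₀.2), (classEq_top hp₀).symm⟩

lemma F2_mem_classes (l : Fin s2) : F2 M1 M2 c l ∈ (bigS M1 M2 c).classes := by
  obtain ⟨p₀, hp₀⟩ := class_nonempty (M1.invCl_mem l)
  exact ⟨((Sum.inl p₀.1 : Fin k ⊕ Fin k), p₀.2), (classEq_inv hp₀).symm⟩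

lemma F1_through (i : Fin s1) (a : ZMod 2) : Through (F1 M1 M2 c i a) := by
  obtain ⟨p₀, hp₀⟩ := class_nonempty (M1.pairRep_class_tw i a)
  obtain ⟨q₀, hq₀⟩ := class_nonempty (M2.pairRep_class_tw (c.1.2 i) (a + c.1.1 i))
  exact ⟨⟨p₀.1, p₀.2, Set.mem_union_left _ (inl_mem_topSet.mpr hp₀)⟩,
    ⟨q₀.1, q₀.2, Set.mem_union_right _ (inr_mem_rowBotSet.mpr hq₀)⟩⟩

lemma F2_through (l : Fin s2) : Through (F2 M1 M2 c l) := by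
  obtain ⟨p₀, hp₀⟩ := class_nonempty (M1.invCl_mem l)
  obtain ⟨q₀, hq₀⟩ := class_nonempty (M2.invCl_mem (c.2 l))
  exact ⟨⟨p₀.1, p₀.2, Set.mem_union_left _ (inl_mem_topSet.mpr hp₀)⟩,
    ⟨q₀.1, q₀.2, Set.mem_union_right _ (inr_mem_rowBotSet.mpr hq₀)⟩⟩

lemma gAct_F1 (i : Fin s1) (a : ZMod 2) :
    gAct '' F1 M1 M2 c i a = F1 M1 M2 c i (1 + a) := by
  rw [gAct_image, F1, tw_union, tw_topSet, tw_rowBotSet, tw_tw, tw_tw]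
  congr 2
  rw [← add_assoc]

lemma gAct_F2 (l : Fin s2) : gAct '' F2 M1 M2 c l = F2 M1 M2 c l := by
  rw [gAct_image, F2, tw_union, tw_topSet, tw_rowBotSet, ← gAct_image, ← gAct_image,
    M1.invCl_inv, M2.invCl_inv]

lemma F1_inj {i i' : Fin s1} {a a' : ZMod 2}
    (h : F1 M1 M2 c i a = F1 M1 M2 c i' a') : i = i' ∧ a = a' := by
  obtain ⟨h1, -⟩ := union_row_inj h
  obtain ⟨ha, hi⟩ := M1.tw_pairRep_eq h1
  exact ⟨hi, ha⟩

lemma F1_noninv (i : Fin s1) (a : ZMod 2) :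
    gAct '' F1 M1 M2 c i a ≠ F1 M1 M2 c i a := by
  rw [gAct_F1]
  intro h
  obtain ⟨-, ha⟩ := F1_inj h
  nth_rewrite 2 [← zero_add a] at ha
  exact one_ne_zero (add_right_cancel ha)

lemma F2_inj {l l' : Fin s2} (h : F2 M1 M2 c l = F2 M1 M2 c l') : l = l' := by
  obtain ⟨h1, -⟩ := union_row_inj h
  obtain ⟨x, hx⟩ := M1.invCl_nonempty l
  exact M1.invCl_mem_unique hx (h1 ▸ hx)

lemma F1_ne_F2 (i : Fin s1) (a : ZMod 2) (l : Fin s2) : F1 M1 M2 c i a ≠ F2 M1 M2 c l := by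
  intro h
  obtain ⟨h1, -⟩ := union_row_inj h
  obtain ⟨x, hx⟩ := class_nonempty (M1.pairRep_class_tw i a)
  exact M1.pairRep_invCl_disj hx (h1 ▸ hx)

lemma through_class_cases {C : Set ((Fin k ⊕ Fin k) × ZMod 2)}
    (hC : C ∈ (bigS M1 M2 c).classes) (hT : Through C) :
    (∃ i a, C = F1 M1 M2 c i a) ∨ (∃ l, C = F2 M1 M2 c l) := by
  obtain ⟨⟨p, x, hpx⟩, ⟨b, y, hby⟩⟩ := hT
  have hCeq : C = {w | bigR M1 M2 c w ((Sum.inl p : Fin k ⊕ Fin k), x)} :=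
    class_eq_of_mem hC hpx
  by_cases h1 : ∃ i a, (p, x) ∈ tw a (M1.pairRep i)
  · obtain ⟨i, a, hmem⟩ := h1
    exact Or.inl ⟨i, a, hCeq.trans (classEq_top hmem)⟩
  by_cases h2 : ∃ l, (p, x) ∈ M1.invCl l
  · obtain ⟨l, hmem⟩ := h2
    exact Or.inr ⟨l, hCeq.trans (classEq_inv hmem)⟩
  · exfalso
    push_neg at h1 h2
    have := hCeq.trans (classEq_rest (fun i a => h1 i a) h2)
    rw [this] at hby
    exact inr_not_mem_topSet hby

end ClassChar

section Counting
variable {k s1 s2 : ℕ} {M1 M2 : MData k s1 s2} {c : Conn s1 s2}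

lemma card_NI_bigS :
    Nat.card {C : Set ((Fin k ⊕ Fin k) × ZMod 2) //
      C ∈ (bigS M1 M2 c).classes ∧ Through C ∧ gAct '' C ≠ C} = 2 * s1 := by
  have hbij : Function.Bijective
      (fun ia : Fin s1 × ZMod 2 =>
        (⟨F1 M1 M2 c ia.1 ia.2, F1_mem_classes ia.1 ia.2, F1_through ia.1 ia.2,
          F1_noninv ia.1 ia.2⟩ :
          {C : Set ((Fin k ⊕ Fin k) × ZMod 2) //
            C ∈ (bigS M1 M2 c).classes ∧ Through C ∧ gAct '' C ≠ C})) := by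
    constructor
    · rintro ⟨i, a⟩ ⟨i', a'⟩ h
      have := F1_inj (congrArg Subtype.val h)
      exact Prod.ext this.1 this.2
    · rintro ⟨C, hC, hT, hNI⟩
      rcases through_class_cases hC hT with ⟨i, a, rfl⟩ | ⟨l, rfl⟩
      · exact ⟨(i, a), rfl⟩
      · exact absurd (gAct_F2 l) hNI
  rw [← Nat.card_eq_of_bijective _ hbij]
  simp [Nat.card_eq_fintype_card, ZMod.card, mul_comm]

lemma card_IV_bigS :
    Nat.card {C : Set ((Fin k ⊕ Fin k) × ZMod 2) //
      C ∈ (bigS M1 M2 c).classes ∧ Through C ∧ gAct '' C = C} = s2 := by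
  have hbij : Function.Bijective
      (fun l : Fin s2 =>
        (⟨F2 M1 M2 c l, F2_mem_classes l, F2_through l, gAct_F2 l⟩ :
          {C : Set ((Fin k ⊕ Fin k) × ZMod 2) //
            C ∈ (bigS M1 M2 c).classes ∧ Through C ∧ gAct '' C = C})) := by
    constructor
    · intro l l' h
      exact F2_inj (congrArg Subtype.val h)
    · rintro ⟨C, hC, hT, hIV⟩
      rcases through_class_cases hC hT with ⟨i, a, rfl⟩ | ⟨l, rfl⟩
      · exact absurd hIV (F1_noninv i a)
      · exact ⟨l, rfl⟩
  rw [← Nat.card_eq_of_bijective _ hbij]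
  simp [Nat.card_eq_fintype_card]

lemma isDiagram_bigS : IsDiagram k s1 s2 (bigS M1 M2 c) :=
  ⟨bigS_stable, card_NI_bigS, card_IV_bigS⟩

/-- characterizing property 3 for `bigS`. -/
lemma char3_bigS (i : Fin s1) {p : Fin k × ZMod 2} (hp : p ∈ M1.pairRep i)
    (q : Fin k × ZMod 2) :
    q ∈ M2.pairRep (c.1.2 i) ↔ cross M1 M2 c p (q.1, c.1.1 i + q.2) := by
  have hp0 : p ∈ tw 0 (M1.pairRep i) := by rwa [tw_zero]
  constructor
  · intro hq
    refine Or.inl ⟨i, 0, hp0, ?_⟩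
    rw [mem_tw]
    simpa [zmod2_aab] using hq
  · rintro (⟨i', a', hp', hq'⟩ | ⟨l, hp', _⟩)
    · obtain ⟨rfl, rfl⟩ := M1.tw_pairRep_mem_unique hp' hp0
      rw [mem_tw] at hq'
      simpa [zmod2_aab] using hq'
    · exact absurd (M1.pairRep_invCl_disj hp0 hp') id

/-- characterizing property 4 for `bigS`. -/
lemma char4_bigS (l : Fin s2) {p : Fin k × ZMod 2} (hp : p ∈ M1.invCl l)
    (q : Fin k × ZMod 2) :
    q ∈ M2.invCl (c.2 l) ↔ cross M1 M2 c p q := by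
  constructor
  · intro hq
    exact Or.inr ⟨l, hp, hq⟩
  · rintro (⟨i', a', hp', _⟩ | ⟨l', hp', hq'⟩)
    · exact absurd (M1.pairRep_invCl_disj hp' hp) id
    · have := M1.invCl_mem_unique hp hp'
      subst this
      exact hq'

end Counting

section Uniqueness
variable {k s1 s2 : ℕ}

lemma MData.ext' {M M' : MData k s1 s2} (hd : M.d = M'.d)
    (hp : M.pairRep = M'.pairRep) (hi : M.invCl = M'.invCl) : M = M' := by
  cases M; cases M'
  simp only at hd hp hi
  subst hd; subst hp; subst hi
  rfl

lemma enum_unique {α : Type*} (μ : α → ℕ) {n : ℕ} {e e' : Fin n → α}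
    (hmono : StrictMono fun i => μ (e i)) (hmono' : StrictMono fun i => μ (e' i))
    (hto : ∀ i, ∃ j, e i = e' j) (hfrom : ∀ j, ∃ i, e' j = e i) : e = e' := by
  classical
  set s : Finset ℕ := Finset.image (fun i => μ (e i)) Finset.univ with hs
  have hcard : s.card = n := by
    rw [hs, Finset.card_image_of_injective _ hmono.injective, Finset.card_univ,
      Fintype.card_fin]
  have hmem : ∀ i, μ (e i) ∈ s := fun i => Finset.mem_image_of_mem _ (Finset.mem_univ i)
  have hmem' : ∀ i, μ (e' i) ∈ s := by
    intro i
    obtain ⟨j, hj⟩ := hfrom i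
    rw [hj]
    exact hmem j
  have h1 : (fun i => μ (e i)) = s.orderEmbOfFin hcard :=
    Finset.orderEmbOfFin_unique hcard hmem hmono
  have h2 : (fun i => μ (e' i)) = s.orderEmbOfFin hcard :=
    Finset.orderEmbOfFin_unique hcard hmem' hmono'
  funext i
  obtain ⟨j, hj⟩ := hto i
  have hμ : μ (e i) = μ (e' i) := by
    have := congrFun (h1.trans h2.symm) i
    exact this
  have hji : j = i := by
    apply hmono'.injective
    show μ (e' j) = μ (e' i)
    rw [← hj]; exact hμ
  rw [hj, hji]

lemma MData.pairRep_inj (M : MData k s1 s2) {i j : Fin s1}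
    (h : M.pairRep i = M.pairRep j) : i = j :=
  M.pairRep_mono.injective (congrArg minV h)

lemma MData.invCl_inj (M : MData k s1 s2) {l l' : Fin s2}
    (h : M.invCl l = M.invCl l') : l = l' :=
  M.invCl_mono.injective (congrArg minV h)

/-- if a normalized pair rep equals a twisted normalized pair rep, the twist is zero. -/
lemma norm_tw_eq {M M' : MData k s1 s2} {i j : Fin s1} {a : ZMod 2}
    (h : M.pairRep i = tw a (M'.pairRep j)) : a = 0 := by
  rcases MData.zmod2_cases a with rfl | rfl
  · rfl
  exfalso
  obtain ⟨x, hxv, hx0⟩ := M.pairRep_norm i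
  obtain ⟨y, hyv, hy0⟩ := M'.pairRep_norm j
  have hmm : minV (M.pairRep i) = minV (M'.pairRep j) := by rw [h, minV_tw]
  have hxy : x = y := Fin.ext (hxv.trans (hmm.trans hyv.symm))
  subst hxy
  rw [h] at hx0
  have m0 : ((x, 0) : Fin k × ZMod 2) ∈ tw 0 (M'.pairRep j) := by rw [tw_zero]; exact hy0
  obtain ⟨h10, -⟩ := M'.tw_pairRep_mem_unique hx0 m0
  exact one_ne_zero h10

lemma bigS_inj {M1 M2 M1' M2' : MData k s1 s2} {c c' : Conn s1 s2}
    (heq : bigS M1 M2 c = bigS M1' M2' c') : M1 = M1' ∧ c = c' ∧ M2 = M2' := by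
  -- every F1-class of the left side is an F1-class of the right side
  have keyF1 : ∀ i : Fin s1, ∃ i',
      M1.pairRep i = M1'.pairRep i' ∧
      tw (c.1.1 i) (M2.pairRep (c.1.2 i)) =
        tw (c'.1.1 i') (M2'.pairRep (c'.1.2 i')) := by
    intro i
    have hcl : F1 M1 M2 c i 0 ∈ (bigS M1' M2' c').classes := by
      rw [← heq]; exact F1_mem_classes i 0
    rcases through_class_cases hcl (F1_through i 0) with ⟨i', a', hF⟩ | ⟨l, hF⟩
    · obtain ⟨h1, h2⟩ := union_row_inj hF
      rw [tw_zero] at h1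
      have ha' : a' = 0 := norm_tw_eq h1
      subst ha'
      rw [tw_zero] at h1
      refine ⟨i', h1, ?_⟩
      rw [zero_add, zero_add] at h2
      exact h2
    · exact absurd (hF ▸ gAct_F2 l) (F1_noninv i 0)
  have keyF1' : ∀ i' : Fin s1, ∃ i,
      M1'.pairRep i' = M1.pairRep i ∧
      tw (c'.1.1 i') (M2'.pairRep (c'.1.2 i')) =
        tw (c.1.1 i) (M2.pairRep (c.1.2 i)) := by
    intro i'
    have hcl : F1 M1' M2' c' i' 0 ∈ (bigS M1 M2 c).classes := by
      rw [heq]; exact F1_mem_classes i' 0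
    rcases through_class_cases hcl (F1_through i' 0) with ⟨i, a, hF⟩ | ⟨l, hF⟩
    · obtain ⟨h1, h2⟩ := union_row_inj hF
      rw [tw_zero] at h1
      have ha : a = 0 := norm_tw_eq h1
      subst ha
      rw [tw_zero] at h1
      refine ⟨i, h1, ?_⟩
      rw [zero_add, zero_add] at h2
      exact h2
    · exact absurd (hF ▸ gAct_F2 l) (F1_noninv i' 0)
  have keyF2 : ∀ l : Fin s2, ∃ l',
      M1.invCl l = M1'.invCl l' ∧ M2.invCl (c.2 l) = M2'.invCl (c'.2 l') := by
    intro l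
    have hcl : F2 M1 M2 c l ∈ (bigS M1' M2' c').classes := by
      rw [← heq]; exact F2_mem_classes l
    rcases through_class_cases hcl (F2_through l) with ⟨i', a', hF⟩ | ⟨l', hF⟩
    · exact absurd (gAct_F2 l) (hF ▸ F1_noninv i' a')
    · exact ⟨l', (union_row_inj hF).1, (union_row_inj hF).2⟩
  have keyF2' : ∀ l' : Fin s2, ∃ l,
      M1'.invCl l' = M1.invCl l ∧ M2'.invCl (c'.2 l') = M2.invCl (c.2 l) := by
    intro l'
    have hcl : F2 M1' M2' c' l' ∈ (bigS M1 M2 c).classes := by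
      rw [heq]; exact F2_mem_classes l'
    rcases through_class_cases hcl (F2_through l') with ⟨i, a, hF⟩ | ⟨l, hF⟩
    · exact absurd (gAct_F2 l') (hF ▸ F1_noninv i a)
    · exact ⟨l, (union_row_inj hF).1, (union_row_inj hF).2⟩
  -- top data agree
  have hR : bigR M1 M2 c = bigR M1' M2' c' :=
    congrArg (fun s : Setoid ((Fin k ⊕ Fin k) × ZMod 2) => s.r) heq
  have hd1 : M1.d = M1'.d := by
    apply Setoid.ext
    intro p q
    exact iff_of_eq (congrFun (congrFun hR (Sum.inl p.1, p.2)) (Sum.inl q.1, q.2))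
  have hd2 : M2.d = M2'.d := by
    apply Setoid.ext
    intro p q
    exact iff_of_eq (congrFun (congrFun hR (Sum.inr p.1, p.2)) (Sum.inr q.1, q.2))
  have hp1 : M1.pairRep = M1'.pairRep := by
    apply enum_unique minV M1.pairRep_mono M1'.pairRep_mono
    · intro i; obtain ⟨i', h, -⟩ := keyF1 i; exact ⟨i', h⟩
    · intro i'; obtain ⟨i, h, -⟩ := keyF1' i'; exact ⟨i, h⟩
  have hi1 : M1.invCl = M1'.invCl := by
    apply enum_unique minV M1.invCl_mono M1'.invCl_mono
    · intro l; obtain ⟨l', h, -⟩ := keyF2 l; exact ⟨l', h⟩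
    · intro l'; obtain ⟨l, h, -⟩ := keyF2' l'; exact ⟨l, h⟩
  -- bottom data agree
  have hp2 : M2.pairRep = M2'.pairRep := by
    apply enum_unique minV M2.pairRep_mono M2'.pairRep_mono
    · intro j
      obtain ⟨i', h1, h2⟩ := keyF1 ((c.1.2).symm j)
      rw [Equiv.apply_symm_apply] at h2
      have : M2.pairRep j = tw (c.1.1 ((c.1.2).symm j) + c'.1.1 i')
          (M2'.pairRep (c'.1.2 i')) := by
        have := congrArg (tw (c.1.1 ((c.1.2).symm j))) h2
        rwa [tw_tw, tw_tw, zmod2_add_self, tw_zero] at this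
      have h0 := norm_tw_eq this
      rw [h0, tw_zero] at this
      exact ⟨c'.1.2 i', this⟩
    · intro j
      obtain ⟨i, h1, h2⟩ := keyF1' ((c'.1.2).symm j)
      rw [Equiv.apply_symm_apply] at h2
      have : M2'.pairRep j = tw (c'.1.1 ((c'.1.2).symm j) + c.1.1 i)
          (M2.pairRep (c.1.2 i)) := by
        have := congrArg (tw (c'.1.1 ((c'.1.2).symm j))) h2
        rwa [tw_tw, tw_tw, zmod2_add_self, tw_zero] at this
      have h0 := norm_tw_eq this
      rw [h0, tw_zero] at this
      exact ⟨c.1.2 i, this⟩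
  have hi2 : M2.invCl = M2'.invCl := by
    apply enum_unique minV M2.invCl_mono M2'.invCl_mono
    · intro m
      obtain ⟨l', h1, h2⟩ := keyF2 ((c.2).symm m)
      rw [Equiv.apply_symm_apply] at h2
      exact ⟨c'.2 l', h2⟩
    · intro m
      obtain ⟨l, h1, h2⟩ := keyF2' ((c'.2).symm m)
      rw [Equiv.apply_symm_apply] at h2
      exact ⟨c.2 l, h2⟩
  -- connection data agree
  have hf : c.1.1 = c'.1.1 ∧ ⇑(c.1.2) = ⇑(c'.1.2) := by
    constructor
    · funext i
      obtain ⟨i', h1, h2⟩ := keyF1 i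
      rw [hp1] at h1
      have hii : i = i' := M1'.pairRep_inj h1
      subst hii
      rw [hp2] at h2
      obtain ⟨hfa, -⟩ := M2'.tw_pairRep_eq h2
      exact hfa
    · funext i
      obtain ⟨i', h1, h2⟩ := keyF1 i
      rw [hp1] at h1
      have hii : i = i' := M1'.pairRep_inj h1
      subst hii
      rw [hp2] at h2
      obtain ⟨-, hsa⟩ := M2'.tw_pairRep_eq h2
      exact hsa
  have hsig2 : ⇑(c.2) = ⇑(c'.2) := by
    funext l
    obtain ⟨l', h1, h2⟩ := keyF2 l
    rw [hi1] at h1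
    have hll : l = l' := M1'.invCl_inj h1
    subst hll
    rw [hi2] at h2
    exact M2'.invCl_inj h2
  refine ⟨MData.ext' hd1 hp1 hi1, ?_, MData.ext' hd2 hp2 hi2⟩
  have : c.1 = c'.1 := Prod.ext hf.1 (Equiv.coe_fn_injective hf.2)
  exact Prod.ext this (Equiv.coe_fn_injective hsig2)
end Uniqueness

section Row
variable {k : ℕ}

def rowPart (ρ : Fin k → Fin k ⊕ Fin k) (C : Set ((Fin k ⊕ Fin k) × ZMod 2)) :
    Set (Fin k × ZMod 2) := {p | (ρ p.1, p.2) ∈ C}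

def rowSetoid (ρ : Fin k → Fin k ⊕ Fin k) (d : Setoid ((Fin k ⊕ Fin k) × ZMod 2)) :
    Setoid (Fin k × ZMod 2) := Setoid.comap (fun p => (ρ p.1, p.2)) d

variable {ρ : Fin k → Fin k ⊕ Fin k} {d : Setoid ((Fin k ⊕ Fin k) × ZMod 2)}

lemma rowSetoid_rel {p q : Fin k × ZMod 2} :
    (rowSetoid ρ d).r p q ↔ d.r (ρ p.1, p.2) (ρ q.1, q.2) := Iff.rfl

lemma rowSetoid_stable (hd : IsStable d) : IsStable (rowSetoid ρ d) :=
  fun g p q h => hd g (ρ p.1, p.2) (ρ q.1, q.2) h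

lemma tw_rowPart (a : ZMod 2) (C : Set ((Fin k ⊕ Fin k) × ZMod 2)) :
    tw a (rowPart ρ C) = rowPart ρ (tw a C) := rfl

lemma mem_rowPart {C : Set ((Fin k ⊕ Fin k) × ZMod 2)} {p : Fin k × ZMod 2} :
    p ∈ rowPart ρ C ↔ (ρ p.1, p.2) ∈ C := Iff.rfl

lemma rowPart_class {C : Set ((Fin k ⊕ Fin k) × ZMod 2)} (hC : C ∈ d.classes)
    {a : Fin k} {x : ZMod 2} (hax : (ρ a, x) ∈ C) :
    rowPart ρ C ∈ (rowSetoid ρ d).classes := by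
  refine ⟨(a, x), ?_⟩
  have h := class_eq_of_mem hC hax
  ext p
  rw [mem_rowPart, h]
  exact Iff.rfl

lemma rowPart_inj {C C' : Set ((Fin k ⊕ Fin k) × ZMod 2)} (hC : C ∈ d.classes)
    (hC' : C' ∈ d.classes) (hne : (rowPart ρ C).Nonempty)
    (h : rowPart ρ C = rowPart ρ C') : C = C' := by
  obtain ⟨p, hp⟩ := hne
  exact classes_eq_of_inter hC hC' ⟨(ρ p.1, p.2), hp, (h ▸ hp : p ∈ rowPart ρ C')⟩

lemma exists_minV {S : Set (Fin k × ZMod 2)} (h : S.Nonempty) :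
    ∃ p ∈ S, (p.1 : ℕ) = minV S := by
  have himg : ((fun p : Fin k × ZMod 2 => (p.1 : ℕ)) '' S).Nonempty := h.image _
  have := Nat.sInf_mem himg
  obtain ⟨p, hp, hpv⟩ := this
  exact ⟨p, hp, hpv⟩

lemma through_tw {C : Set ((Fin k ⊕ Fin k) × ZMod 2)} (a : ZMod 2) (h : Through C) :
    Through (tw a C) := by
  obtain ⟨⟨b, x, hbx⟩, ⟨b', x', hbx'⟩⟩ := h
  refine ⟨⟨b, a + x, ?_⟩, ⟨b', a + x', ?_⟩⟩
  · show ((Sum.inl b : Fin k ⊕ Fin k), a + (a + x)) ∈ C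
    rwa [zmod2_aab]
  · show ((Sum.inr b' : Fin k ⊕ Fin k), a + (a + x')) ∈ C
    rwa [zmod2_aab]

lemma tw_cancel {T : Type*} {S S' : Set (T × ZMod 2)} {a b : ZMod 2}
    (h : tw a S = tw b S') : S = tw (a + b) S' := by
  have := congrArg (tw a) h
  rwa [tw_tw, tw_tw, zmod2_add_self, tw_zero] at this

lemma exists_mono_enum {α : Type*} [Finite α] {S : Set α} (μ : α → ℕ)
    (hinj : Set.InjOn μ S) {n : ℕ} (hcard : Nat.card S = n) :
    ∃ e : Fin n → α, (∀ i, e i ∈ S) ∧ (StrictMono fun i => μ (e i)) ∧ ∀ x ∈ S, ∃ i, e i = x := by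
  classical
  have hfin : S.Finite := Set.toFinite S
  have hcard' : hfin.toFinset.card = n := by
    rw [← Set.ncard_eq_toFinset_card S hfin, ← Nat.card_coe_set_eq, hcard]
  have hinj' : Set.InjOn μ hfin.toFinset := by rwa [Set.Finite.coe_toFinset]
  set t : Finset ℕ := hfin.toFinset.image μ with ht
  have htcard : t.card = n := by rw [ht, Finset.card_image_of_injOn hinj', hcard']
  have hex : ∀ i : Fin n, ∃ x, x ∈ S ∧ μ x = t.orderEmbOfFin htcard i := by
    intro i
    have h0 : t.orderEmbOfFin htcard i ∈ t := Finset.orderEmbOfFin_mem _ _ _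
    obtain ⟨x, hx, hμ⟩ := Finset.mem_image.mp h0
    exact ⟨x, hfin.mem_toFinset.mp hx, hμ⟩
  choose e he hμ using hex
  refine ⟨e, he, ?_, ?_⟩
  · have : StrictMono (t.orderEmbOfFin htcard) := (t.orderEmbOfFin htcard).strictMono
    intro i j hij
    show μ (e i) < μ (e j)
    rw [hμ i, hμ j]
    exact this hij
  · intro x hx
    have hmem : μ x ∈ t :=
      Finset.mem_image.mpr ⟨x, hfin.mem_toFinset.mpr hx, rfl⟩
    have : μ x ∈ Set.range (t.orderEmbOfFin htcard) := by
      rw [Finset.range_orderEmbOfFin]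
      exact hmem
    obtain ⟨i, hi⟩ := this
    refine ⟨i, hinj (he i) hx ?_⟩
    rw [hμ i, hi]

end Row

section Extract
variable {k s1 s2 : ℕ}

lemma exists_rowMData {d : Setoid ((Fin k ⊕ Fin k) × ZMod 2)}
    (hst : IsStable d) (ρ : Fin k → Fin k ⊕ Fin k)
    (hrow : ∀ C, Through C → (rowPart ρ C).Nonempty)
    (hNI : Nat.card {C : Set ((Fin k ⊕ Fin k) × ZMod 2) //
      C ∈ d.classes ∧ Through C ∧ gAct '' C ≠ C} = 2 * s1)
    (hIV : Nat.card {C : Set ((Fin k ⊕ Fin k) × ZMod 2) //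
      C ∈ d.classes ∧ Through C ∧ gAct '' C = C} = s2) :
    ∃ M : MData k s1 s2, M.d = rowSetoid ρ d ∧
      (∀ i, ∃ C, (C ∈ d.classes ∧ Through C ∧ gAct '' C ≠ C) ∧ rowPart ρ C = M.pairRep i) ∧
      (∀ C, C ∈ d.classes → Through C → gAct '' C ≠ C →
        ∃ i a, rowPart ρ C = tw a (M.pairRep i)) ∧
      (∀ l, ∃ C, (C ∈ d.classes ∧ Through C ∧ gAct '' C = C) ∧ rowPart ρ C = M.invCl l) ∧
      (∀ C, C ∈ d.classes → Through C → gAct '' C = C → ∃ l, rowPart ρ C = M.invCl l) := by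
  classical
  -- basic facts
  have hpartcl : ∀ C, C ∈ d.classes → Through C →
      rowPart ρ C ∈ (rowSetoid ρ d).classes := by
    intro C hC hT
    obtain ⟨p, hp⟩ := hrow C hT
    exact rowPart_class hC hp
  have htwNI : ∀ C, (C ∈ d.classes ∧ Through C ∧ gAct '' C ≠ C) → ∀ a,
      (tw a C ∈ d.classes ∧ Through (tw a C) ∧ gAct '' tw a C ≠ tw a C) := by
    rintro C ⟨hC, hT, hni⟩ a
    refine ⟨tw_class hst hC a, through_tw a hT, ?_⟩
    rw [gAct_image, tw_tw]
    intro h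
    have h2 := tw_cancel h
    rw [add_assoc, zmod2_add_self, add_zero] at h2
    exact hni (by rw [gAct_image]; exact h2.symm)
  have hpart_noninv : ∀ C, C ∈ d.classes → Through C → gAct '' C ≠ C →
      tw 1 (rowPart ρ C) ≠ rowPart ρ C := by
    intro C hC hT hni h
    rw [tw_rowPart] at h
    have h1C : tw 1 C ∈ d.classes := tw_class hst hC 1
    have := rowPart_inj h1C hC (by
      rw [← tw_rowPart]
      obtain ⟨p, hp⟩ := hrow C hT
      exact ⟨(p.1, 1 + p.2), mem_tw_shift (a := 0) 1 (by rwa [tw_zero])⟩) h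
    exact hni (by rw [gAct_image]; exact this)
  have hinv_part : ∀ C, C ∈ d.classes → gAct '' C = C →
      tw 1 (rowPart ρ C) = rowPart ρ C := by
    intro C hC hinv
    rw [tw_rowPart, ← gAct_image, hinv]
  -- both-coordinate membership in invariant row classes
  have hinv_both : ∀ T : Set (Fin k × ZMod 2), tw 1 T = T → ∀ p ∈ T, ∀ y, ((p.1 : Fin k), y) ∈ T := by
    intro T hT p hp y
    rcases MData.zmod2_cases y with rfl | rfl <;> rcases MData.zmod2_cases p.2 with h2 | h2
    · rwa [← h2, Prod.mk.eta]
    · rw [← hT, mem_tw]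
      show ((p.1 : Fin k), 1 + 0) ∈ T
      rw [show (1 + 0 : ZMod 2) = p.2 by rw [h2, add_zero], Prod.mk.eta]
      exact hp
    · rw [← hT, mem_tw]
      show ((p.1 : Fin k), 1 + 1) ∈ T
      rw [show (1 + 1 : ZMod 2) = 0 from rfl, ← h2, Prod.mk.eta]
      exact hp
    · rwa [← h2, Prod.mk.eta]
  -- the set of normalized non-invariant row representatives
  set NS : Set (Set (Fin k × ZMod 2)) :=
    {T | (∃ C, (C ∈ d.classes ∧ Through C ∧ gAct '' C ≠ C) ∧ rowPart ρ C = T) ∧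
      ∃ j : Fin k, (j : ℕ) = minV T ∧ (j, (0 : ZMod 2)) ∈ T} with hNS
  set IS : Set (Set (Fin k × ZMod 2)) :=
    {T | ∃ C, (C ∈ d.classes ∧ Through C ∧ gAct '' C = C) ∧ rowPart ρ C = T} with hIS
  -- membership in NS gives a class of the row setoid
  have hNScl : ∀ T ∈ NS, T ∈ (rowSetoid ρ d).classes := by
    rintro T ⟨⟨C, ⟨hC, hT, hni⟩, rfl⟩, -⟩
    exact hpartcl C hC hT
  have hIScl : ∀ T ∈ IS, T ∈ (rowSetoid ρ d).classes := by
    rintro T ⟨C, ⟨hC, hT, hni⟩, rfl⟩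
    exact hpartcl C hC hT
  -- normalization of an arbitrary noninvariant through class
  have hnormalize : ∀ C, C ∈ d.classes → Through C → gAct '' C ≠ C →
      ∃ b : ZMod 2, tw b (rowPart ρ C) ∈ NS := by
    intro C hC hT hni
    obtain ⟨p, hp, hpv⟩ := exists_minV (hrow C hT)
    refine ⟨p.2, ⟨tw p.2 C, htwNI C ⟨hC, hT, hni⟩ p.2, (tw_rowPart _ _).symm⟩,
      p.1, ?_, ?_⟩
    · rw [minV_tw]; exact hpv
    · rw [mem_tw]
      show ((p.1 : Fin k), p.2 + 0) ∈ rowPart ρ C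
      rwa [add_zero, Prod.mk.eta]
  -- the bijection NS × ZMod 2 ≃ noninvariant through classes
  have hfex : ∀ Ta : {T // T ∈ NS} × ZMod 2, ∃ C,
      (C ∈ d.classes ∧ Through C ∧ gAct '' C ≠ C) ∧ rowPart ρ C = tw Ta.2 Ta.1.val := by
    rintro ⟨⟨T, hT⟩, a⟩
    obtain ⟨⟨C, hC, hpart⟩, -⟩ := hT
    refine ⟨tw a C, htwNI C hC a, ?_⟩
    show rowPart ρ (tw a C) = tw a T
    rw [← tw_rowPart, hpart]
  choose fC hfC1 hfC2 using hfex
  have hNNcard : Nat.card {T // T ∈ NS} = s1 := by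
    have hbij : Function.Bijective (fun Ta : {T // T ∈ NS} × ZMod 2 =>
        (⟨fC Ta, hfC1 Ta⟩ : {C : Set ((Fin k ⊕ Fin k) × ZMod 2) //
          C ∈ d.classes ∧ Through C ∧ gAct '' C ≠ C})) := by
      constructor
      · rintro ⟨⟨T, hT⟩, a⟩ ⟨⟨T', hT'⟩, a'⟩ heq
        have heq' : fC (⟨T, hT⟩, a) = fC (⟨T', hT'⟩, a') := congrArg Subtype.val heq
        have hr : tw a T = tw a' T' := by
          rw [← hfC2 (⟨T, hT⟩, a), ← hfC2 (⟨T', hT'⟩, a'), heq']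
        by_cases haa : a = a'
        · subst haa
          have : T = T' := tw_inj hr
          subst this
          rfl
        · exfalso
          have h1 : T = tw 1 T' := by
            have := tw_cancel hr
            rwa [zmod2_ne_iff.mp haa] at this
          obtain ⟨⟨C, hCni, hCpart⟩, j, hjv, hj0⟩ := hT
          obtain ⟨⟨C', hCni', hCpart'⟩, j', hjv', hj0'⟩ := hT'
          have hmm : minV T = minV T' := by rw [h1, minV_tw]
          have hjj : j = j' := Fin.ext (by rw [hjv, hjv', hmm])
          subst hjj
          -- (j,0) ∈ T = tw 1 T' so (j,1) ∈ T'; with (j,0) ∈ T' get T' invariant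
          have hmem1 : ((j, 0) : Fin k × ZMod 2) ∈ tw 1 T' := h1 ▸ hj0
          have hT'cl : T' ∈ (rowSetoid ρ d).classes := hNScl T' ⟨⟨C', hCni', hCpart'⟩, j, hjv', hj0'⟩
          have htw1cl : tw 1 T' ∈ (rowSetoid ρ d).classes :=
            tw_class (rowSetoid_stable hst) hT'cl 1
          have : tw 1 T' = T' := classes_eq_of_inter htw1cl hT'cl ⟨(j, 0), hmem1, hj0'⟩
          rw [← hCpart'] at this
          exact hpart_noninv C' hCni'.1 hCni'.2.1 hCni'.2.2 this
      · rintro ⟨C, hC, hT, hni⟩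
        obtain ⟨b, hb⟩ := hnormalize C hC hT hni
        refine ⟨(⟨tw b (rowPart ρ C), hb⟩, b), ?_⟩
        apply Subtype.ext
        show fC (⟨tw b (rowPart ρ C), hb⟩, b) = C
        have h2 := hfC2 (⟨tw b (rowPart ρ C), hb⟩, b)
        have h3 : rowPart ρ (fC (⟨tw b (rowPart ρ C), hb⟩, b)) = rowPart ρ C := by
          rw [h2]
          show tw b (tw b (rowPart ρ C)) = rowPart ρ C
          rw [tw_tw, zmod2_add_self, tw_zero]
        have hC1 := hfC1 (⟨tw b (rowPart ρ C), hb⟩, b)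
        exact rowPart_inj hC1.1 hC (by rw [h3]; exact hrow C hT) h3
    have := Nat.card_eq_of_bijective _ hbij
    rw [hNI, Nat.card_prod, Nat.card_zmod] at this
    omega
  have hIScard : Nat.card {T // T ∈ IS} = s2 := by
    have hbij : Function.Bijective (fun Csub : {C : Set ((Fin k ⊕ Fin k) × ZMod 2) //
        C ∈ d.classes ∧ Through C ∧ gAct '' C = C} =>
        (⟨rowPart ρ Csub.val, ⟨Csub.val, Csub.2, rfl⟩⟩ : {T // T ∈ IS})) := by
      constructor
      · rintro ⟨C, hC, hT, hinv⟩ ⟨C', hC', hT', hinv'⟩ heq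
        have := congrArg Subtype.val heq
        exact Subtype.ext (rowPart_inj hC hC' (hrow C hT) this)
      · rintro ⟨T, C, hC, rfl⟩
        exact ⟨⟨C, hC⟩, rfl⟩
    have := Nat.card_eq_of_bijective _ hbij
    rw [hIV] at this
    exact this.symm
  -- minV is injective on NS and IS
  have hNSinj : Set.InjOn minV NS := by
    rintro T ⟨hTC, j, hjv, hj0⟩ T' ⟨hTC', j', hjv', hj0'⟩ hmm
    have hjj : j = j' := Fin.ext (by rw [hjv, hjv', hmm])
    subst hjj
    exact classes_eq_of_inter (hNScl T ⟨hTC, j, hjv, hj0⟩)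
      (hNScl T' ⟨hTC', j, hjv', hj0'⟩) ⟨(j, 0), hj0, hj0'⟩
  have hISinj : Set.InjOn minV IS := by
    rintro T hT T' hT' hmm
    obtain ⟨C, ⟨hC, hTh, hinv⟩, rfl⟩ := hT
    obtain ⟨C', ⟨hC', hTh', hinv'⟩, rfl⟩ := hT'
    obtain ⟨p, hp, hpv⟩ := exists_minV (hrow C hTh)
    obtain ⟨p', hp', hpv'⟩ := exists_minV (hrow C' hTh')
    have hpp : p.1 = p'.1 := Fin.ext (by rw [hpv, hpv', hmm])
    have h0 : ((p.1 : Fin k), (0 : ZMod 2)) ∈ rowPart ρ C :=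
      hinv_both _ (hinv_part C hC hinv) p hp 0
    have h0' : ((p.1 : Fin k), (0 : ZMod 2)) ∈ rowPart ρ C' := by
      rw [hpp]
      exact hinv_both _ (hinv_part C' hC' hinv') p' hp' 0
    exact classes_eq_of_inter (hpartcl C hC hTh) (hpartcl C' hC' hTh') ⟨_, h0, h0'⟩
  -- enumerations
  obtain ⟨P, hPmem, hPmono, hPsurj⟩ := exists_mono_enum minV hNSinj hNNcard
  obtain ⟨Q, hQmem, hQmono, hQsurj⟩ := exists_mono_enum minV hISinj hIScard
  refine ⟨⟨rowSetoid ρ d, rowSetoid_stable hst, P, ?_, ?_, ?_, hPmono, Q, ?_, ?_, hQmono⟩,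
    rfl, ?_, ?_, ?_, ?_⟩
  · exact fun i => hNScl _ (hPmem i)
  · intro i
    obtain ⟨⟨C, hCni, hCpart⟩, -⟩ := hPmem i
    rw [gAct_image, ← hCpart]
    exact hpart_noninv C hCni.1 hCni.2.1 hCni.2.2
  · exact fun i => (hPmem i).2
  · exact fun l => hIScl _ (hQmem l)
  · intro l
    obtain ⟨C, ⟨hC, hT, hinv⟩, hCpart⟩ := hQmem l
    rw [gAct_image, ← hCpart]
    exact hinv_part C hC hinv
  · exact fun i => (hPmem i).1
  · intro C hC hT hni
    obtain ⟨b, hb⟩ := hnormalize C hC hT hni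
    obtain ⟨i, hi⟩ := hPsurj _ hb
    refine ⟨i, b, ?_⟩
    show rowPart ρ C = tw b (P i)
    rw [hi, tw_tw, zmod2_add_self, tw_zero]
  · exact fun l => hQmem l
  · intro C hC hT hinv
    obtain ⟨l, hl⟩ := hQsurj (rowPart ρ C) ⟨C, ⟨hC, hT, hinv⟩, rfl⟩
    exact ⟨l, hl.symm⟩
end Extract

section Surj
variable {k s1 s2 : ℕ}

lemma bigS_surj {d : Setoid ((Fin k ⊕ Fin k) × ZMod 2)} (hd : IsDiagram k s1 s2 d) :
    ∃ (M1 M2 : MData k s1 s2) (c : Conn s1 s2), bigS M1 M2 c = d := by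
  classical
  obtain ⟨hst, hNI, hIV⟩ := hd
  have hrowL : ∀ C : Set ((Fin k ⊕ Fin k) × ZMod 2), Through C →
      (rowPart Sum.inl C).Nonempty := by
    rintro C ⟨⟨a, x, h⟩, -⟩; exact ⟨(a, x), h⟩
  have hrowR : ∀ C : Set ((Fin k ⊕ Fin k) × ZMod 2), Through C →
      (rowPart Sum.inr C).Nonempty := by
    rintro C ⟨-, ⟨a, x, h⟩⟩; exact ⟨(a, x), h⟩
  obtain ⟨M1, hM1d, hM1i, hM1all, hM1l, hM1linv⟩ :=
    exists_rowMData hst Sum.inl hrowL hNI hIV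
  obtain ⟨M2, hM2d, hM2i, hM2all, hM2l, hM2linv⟩ :=
    exists_rowMData hst Sum.inr hrowR hNI hIV
  choose Ct hCt1 hCt2 using hM1i
  choose Dt hDt1 hDt2 using hM1l
  choose σ f hσf using fun i => hM2all (Ct i) (hCt1 i).1 (hCt1 i).2.1 (hCt1 i).2.2
  choose τ hτ using fun l => hM2linv (Dt l) (hDt1 l).1 (hDt1 l).2.1 (hDt1 l).2.2
  -- injectivity of the connecting maps
  have hσinj : Function.Injective σ := by
    intro i i' heq
    have h1 : rowPart Sum.inr (Ct i') = tw (f i' + f i) (rowPart Sum.inr (Ct i)) := by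
      rw [hσf, hσf, heq, tw_tw, add_assoc, zmod2_add_self, add_zero]
    rw [tw_rowPart] at h1
    have hCeq : Ct i' = tw (f i' + f i) (Ct i) :=
      rowPart_inj (hCt1 i').1 (tw_class hst (hCt1 i).1 _)
        (hrowR _ (hCt1 i').2.1) h1
    have htop : M1.pairRep i' = tw (f i' + f i) (M1.pairRep i) := by
      rw [← hCt2, ← hCt2, hCeq, tw_rowPart]
    have h0 := norm_tw_eq htop
    rw [h0, tw_zero] at htop
    exact (M1.pairRep_inj htop).symm
  have hτinj : Function.Injective τ := by
    intro l l' heq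
    have h1 : rowPart Sum.inr (Dt l) = rowPart Sum.inr (Dt l') := by
      rw [hτ, hτ, heq]
    have hDeq : Dt l = Dt l' :=
      rowPart_inj (hDt1 l).1 (hDt1 l').1 (hrowR _ (hDt1 l).2.1) h1
    have : M1.invCl l = M1.invCl l' := by rw [← hDt2, ← hDt2, hDeq]
    exact M1.invCl_inj this
  set c : Conn s1 s2 :=
    ((f, Equiv.ofBijective σ ((Finite.injective_iff_bijective).mp hσinj)),
      Equiv.ofBijective τ ((Finite.injective_iff_bijective).mp hτinj)) with hc
  refine ⟨M1, M2, c, ?_⟩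
  have hcross : ∀ p q : Fin k × ZMod 2, cross M1 M2 c p q ↔
      d.r (Sum.inl p.1, p.2) (Sum.inr q.1, q.2) := by
    intro p q
    constructor
    · rintro (⟨i, a, hp, hq⟩ | ⟨l, hp, hq⟩)
      · have hp' : (Sum.inl p.1, p.2) ∈ tw a (Ct i) := by
          rw [← hCt2, tw_rowPart] at hp
          exact hp
        have hq' : (Sum.inr q.1, q.2) ∈ tw a (Ct i) := by
          have : q ∈ rowPart Sum.inr (tw a (Ct i)) := by
            rw [← tw_rowPart, hσf i, tw_tw]
            exact hq
          exact this
        exact rel_of_mem_class (tw_class hst (hCt1 i).1 a) hp' hq'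
      · have hp' : (Sum.inl p.1, p.2) ∈ Dt l := by
          rw [← hDt2] at hp
          exact hp
        have hq' : (Sum.inr q.1, q.2) ∈ Dt l := by
          have : q ∈ rowPart Sum.inr (Dt l) := by
            rw [hτ l]
            exact hq
          exact this
        exact rel_of_mem_class (hDt1 l).1 hp' hq'
    · intro hrel
      set C : Set ((Fin k ⊕ Fin k) × ZMod 2) := {w | d.r w (Sum.inl p.1, p.2)} with hCdef
      have hCcl : C ∈ d.classes := ⟨_, rfl⟩
      have hpC : (Sum.inl p.1, p.2) ∈ C := d.refl' _
      have hqC : (Sum.inr q.1, q.2) ∈ C := d.symm' hrel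
      have hTh : Through C := ⟨⟨p.1, p.2, hpC⟩, ⟨q.1, q.2, hqC⟩⟩
      by_cases hni : gAct '' C = C
      · obtain ⟨l, hl⟩ := hM1linv C hCcl hTh hni
        have hCeq : C = Dt l :=
          rowPart_inj hCcl (hDt1 l).1 (hrowL C hTh) (by rw [hl, ← hDt2 l])
        refine Or.inr ⟨l, ?_, ?_⟩
        · show p ∈ M1.invCl l
          rw [← hDt2 l, ← hCeq]
          exact hpC
        · show q ∈ M2.invCl (τ l)
          rw [← hτ l, ← hCeq]
          exact hqC
      · obtain ⟨i, a, hia⟩ := hM1all C hCcl hTh hni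
        have hCeq : C = tw a (Ct i) :=
          rowPart_inj hCcl (tw_class hst (hCt1 i).1 a) (hrowL C hTh)
            (by rw [hia, ← hCt2, tw_rowPart])
        refine Or.inl ⟨i, a, ?_, ?_⟩
        · show p ∈ tw a (M1.pairRep i)
          rw [← hia]
          exact hpC
        · show q ∈ tw (a + f i) (M2.pairRep (σ i))
          rw [← tw_tw, ← hσf i, tw_rowPart, ← hCeq]
          exact hqC
  apply Setoid.ext
  rintro ⟨p | p, x⟩ ⟨q | q, y⟩
  · show M1.d.r (p, x) (q, y) ↔ _
    rw [hM1d]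
    exact Iff.rfl
  · exact hcross (p, x) (q, y)
  · exact Iff.trans (hcross (q, y) (p, x)) ⟨fun h => d.symm' h, fun h => d.symm' h⟩
  · show M2.d.r (p, x) (q, y) ↔ _
    rw [hM2d]
    exact Iff.rfl
end Surj

/-- the map sending a diagram `d ∈ I(k, s1, s2)` to its top
restriction with through-class data `(d⁺, P)`, its bottom restriction with
through-class data `(d⁻, Q)`, and the group element `((f, σ1), σ2)` recording how
the through classes of `d` connect the top data to the bottom data, is a bijection
`I(k, s1, s2) ≃ M[(r,(s1,s2))] × ((Fin s1 → ZMod 2) ⋊ S_{s1}) × S_{s2} × M[(r,(s1,s2))]`.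
Writing `Φ d = (Mt, ((f, σ1), σ2), Mb)`, the characterizing properties are:
`Mt.d` (resp. `Mb.d`) is the restriction of `d` to the top (resp. bottom) row; for
each `i : Fin s1` the through class of `d` containing the `i`-th chosen top class
pair meets the bottom row in the `σ1 i`-th chosen bottom class pair with twist
`f i`; and for each `l : Fin s2` the through class containing the `l`-th chosen
`g`-invariant top class contains the `σ2 l`-th chosen `g`-invariant bottom class. -/
theorem stmt_12 (k s1 s2 : ℕ) (h : 2 * s1 + s2 ≤ 2 * k) :
    ∃ Φ : {d : Setoid ((Fin k ⊕ Fin k) × ZMod 2) // IsDiagram k s1 s2 d} ≃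
        MData k s1 s2 ×
          (((Fin s1 → ZMod 2) × Equiv.Perm (Fin s1)) × Equiv.Perm (Fin s2)) ×
          MData k s1 s2,
      ∀ d : {d : Setoid ((Fin k ⊕ Fin k) × ZMod 2) // IsDiagram k s1 s2 d},
        (∀ p q : Fin k × ZMod 2,
          (Φ d).1.d.r p q ↔ d.val.r (Sum.inl p.1, p.2) (Sum.inl q.1, q.2)) ∧
        (∀ p q : Fin k × ZMod 2,
          (Φ d).2.2.d.r p q ↔ d.val.r (Sum.inr p.1, p.2) (Sum.inr q.1, q.2)) ∧
        (∀ i : Fin s1, ∀ p ∈ (Φ d).1.pairRep i, ∀ q : Fin k × ZMod 2,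
          q ∈ (Φ d).2.2.pairRep ((Φ d).2.1.1.2 i) ↔
            d.val.r (Sum.inl p.1, p.2) (Sum.inr q.1, (Φ d).2.1.1.1 i + q.2)) ∧
        (∀ l : Fin s2, ∀ p ∈ (Φ d).1.invCl l, ∀ q : Fin k × ZMod 2,
          q ∈ (Φ d).2.2.invCl ((Φ d).2.1.2 l) ↔
            d.val.r (Sum.inl p.1, p.2) (Sum.inr q.1, q.2)) := by
  classical
  set G : MData k s1 s2 × Conn s1 s2 × MData k s1 s2 →
      {d : Setoid ((Fin k ⊕ Fin k) × ZMod 2) // IsDiagram k s1 s2 d} :=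
    fun t => ⟨bigS t.1 t.2.2 t.2.1, isDiagram_bigS⟩ with hG
  have hGbij : Function.Bijective G := by
    constructor
    · rintro ⟨M1, c, M2⟩ ⟨M1', c', M2'⟩ hEq
      have hEq' : bigS M1 M2 c = bigS M1' M2' c' := congrArg Subtype.val hEq
      obtain ⟨h1, h2, h3⟩ := bigS_inj hEq'
      rw [Prod.ext_iff, Prod.ext_iff]
      exact ⟨h1, h2, h3⟩
    · rintro ⟨d, hd⟩
      obtain ⟨M1, M2, c, hEq⟩ := bigS_surj hd
      exact ⟨(M1, c, M2), Subtype.ext hEq⟩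
  refine ⟨(Equiv.ofBijective G hGbij).symm, ?_⟩
  intro dsub
  set t := (Equiv.ofBijective G hGbij).symm dsub with ht
  have hGt : G t = dsub := Equiv.apply_symm_apply (Equiv.ofBijective G hGbij) dsub
  have hval : dsub.val = bigS t.1 t.2.2 t.2.1 := (congrArg Subtype.val hGt).symm
  refine ⟨?_, ?_, ?_, ?_⟩
  · intro p q
    rw [hval]
    exact Iff.rfl
  · intro p q
    rw [hval]
    exact Iff.rfl
  · intro i p hp q
    rw [hval]
    exact char3_bigS i hp q
  · intro l p hp q
    rw [hval]
    exact char4_bigS l hp q
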